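/- Let λ > 0 and ξ > 0 be ordinals. If ξ is a limit ordinal, then cf(e^λ(ξ)) = cf(ξ); if ξ is a successor ordinal, then cf(e^λ(ξ)) = max(cf(λ), ℵ_0). -/

import Mathlib

open Ordinal Set

noncomputable section

universe u

/-! ## Basic topological notions (explicit topologies) -/

/-- The derived set (set of limit points) of `A` w.r.t. the topology `t`. -/
def dSet {X : Type u} (t : TopologicalSpace X) (A : Set X) : Set X :=
  {x | ∀ U : Set X, t.IsOpen U → x ∈ U → ∃ y, y ∈ U ∩ A ∧ y ≠ x}

/-- Transfinite iterates of the derived-set operator, starting from the whole space. -/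
def dIter {X : Type u} (t : TopologicalSpace X) (o : Ordinal.{u}) : Set X :=
  Ordinal.limitRecOn o Set.univ (fun _ ih => dSet t ih)
    (fun o _ ih => ⋂ (o' : Ordinal.{u}) (h : o' < o), ih o' h)

/-- The Cantor–Bendixson rank of a point: the least `ξ` with `x ∉ d^{ξ+1} X`. -/
def ptRank {X : Type u} (t : TopologicalSpace X) (x : X) : Ordinal.{u} :=
  sInf {ξ : Ordinal.{u} | x ∉ dIter t (ξ + 1)}

/-- The rank of a space: `sup_{x ∈ X} (ρ(x) + 1)`. -/
def spRank (X : Type u) (t : TopologicalSpace X) : Ordinal.{u} :=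
  ⨆ x : X, ptRank t x + 1

/-- A space is scattered if every nonempty subset has an isolated point. -/
def IsScattered {X : Type u} (t : TopologicalSpace X) : Prop :=
  ∀ A : Set X, A.Nonempty → ∃ x ∈ A, ∃ U : Set X, t.IsOpen U ∧ U ∩ A = {x}

/-- A `d`-map: continuous, open and pointwise discrete. -/
def IsDMap {X : Type u} {Y : Type*} (t : TopologicalSpace X) (s : TopologicalSpace Y)
    (f : X → Y) : Prop :=
  @Continuous _ _ t s f ∧ @IsOpenMap _ _ t s f ∧
    ∀ y : Y, ∀ x : X, f x = y →
      ∃ U : Set X, t.IsOpen U ∧ x ∈ U ∧ ∀ z ∈ U, f z = y → z = x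

/-! ## Hyperexponentials and hyperlogarithms -/

/-- The exponential `e ξ = -1 + ω^ξ`. -/
def eFun (x : Ordinal.{u}) : Ordinal.{u} := ω ^ x - 1

/-- `E` is the family of hyperexponentials: a family of normal functions with `E 1 = e`,
`E (α+β) = E α ∘ E β`, pointwise minimal among all such families. -/
def IsHyperexpFamily (E : Ordinal.{u} → Ordinal.{u} → Ordinal.{u}) : Prop :=
  (∀ a, Order.IsNormal (E a)) ∧ E 1 = eFun ∧ (∀ a b, E (a + b) = E a ∘ E b) ∧
    ∀ F : Ordinal.{u} → Ordinal.{u} → Ordinal.{u},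
      (∀ a, Order.IsNormal (F a)) → F 1 = eFun → (∀ a b, F (a + b) = F a ∘ F b) →
        ∀ a b, E a b ≤ F a b

/-- The end logarithm: `ℓ 0 = 0` and `ℓ ξ` is the unique `β` with `ξ = α + ω^β`. -/
def ellFun (x : Ordinal.{u}) : Ordinal.{u} :=
  if x = 0 then 0 else sInf {b : Ordinal.{u} | ∃ a, x = a + ω ^ b}

/-- An initial function maps initial segments onto initial segments. -/
def IsInitialFun (f : Ordinal.{u} → Ordinal.{u}) : Prop :=
  ∀ o : Ordinal.{u}, ∃ o' : Ordinal.{u}, f '' Set.Iio o = Set.Iio o'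

/-- `L` is the family of hyperlogarithms: a family of initial functions with `L 1 = ℓ`,
`L (α+β) = L β ∘ L α`, pointwise maximal among all such families. -/
def IsHyperlogFamily (L : Ordinal.{u} → Ordinal.{u} → Ordinal.{u}) : Prop :=
  (∀ a, IsInitialFun (L a)) ∧ L 1 = ellFun ∧ (∀ a b, L (a + b) = L b ∘ L a) ∧
    ∀ M : Ordinal.{u} → Ordinal.{u} → Ordinal.{u},
      (∀ a, IsInitialFun (M a)) → M 1 = ellFun → (∀ a b, M (a + b) = M b ∘ M a) →
        ∀ a b, M a b ≤ L a b

/-! ## Icard topologies -/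

/-- The generalized Icard topology `τ_λ` based on a space `(X, t)`, relative to a family `L`
of hyperlogarithms: the least topology containing `t` and all sets
`(α, β]_ξ = {x | α < ℓ^ξ ρ_t(x) ≤ β}` (including `α = -1`, i.e. `[0, β]_ξ`), for `ξ < λ`. -/
def IcardTop {X : Type u} (L : Ordinal.{u} → Ordinal.{u} → Ordinal.{u})
    (t : TopologicalSpace X) (lam : Ordinal.{u}) : TopologicalSpace X :=
  t ⊓ TopologicalSpace.generateFrom
    {S : Set X | ∃ ξ < lam,
      (∃ b : Ordinal.{u}, S = {x | L ξ (ptRank t x) ≤ b}) ∨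
      (∃ a b : Ordinal.{u}, a < b ∧ S = {x | a < L ξ (ptRank t x) ∧ L ξ (ptRank t x) ≤ b})}

/-! ## Ordinal spaces -/

/-- The ordinal corresponding to a point of `Θ.ToType`. -/
def ordVal {Θ : Ordinal.{u}} (x : Θ.ToType) : Ordinal.{u} :=
  @Ordinal.typein Θ.ToType (· < ·) isWellOrder_lt x

/-- The left topology `I₀` on (the canonical type of order type) `Θ`, generated by the
intervals `[0, β]`. -/
def leftTop (Θ : Ordinal.{u}) : TopologicalSpace Θ.ToType :=
  TopologicalSpace.generateFrom {S : Set Θ.ToType | ∃ b : Θ.ToType, S = Set.Iic b}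

/-- The interval topology `I₁` on `Θ`, generated by the sets `[0, β]` and `(α, β]`. -/
def intervalTop (Θ : Ordinal.{u}) : TopologicalSpace Θ.ToType :=
  TopologicalSpace.generateFrom
    {S : Set Θ.ToType | (∃ b, S = Set.Iic b) ∨ ∃ a b : Θ.ToType, S = Set.Ioc a b}

/-- The Icard topology `I_λ = (I₀)_λ` on the ordinal `Θ`: the least topology containing the
left topology and all sets `{x < Θ | α < ℓ^ξ x ≤ β}` for `ξ < λ`. -/
def ordIcard (L : Ordinal.{u} → Ordinal.{u} → Ordinal.{u}) (Θ lam : Ordinal.{u}) :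
    TopologicalSpace Θ.ToType :=
  leftTop Θ ⊓ TopologicalSpace.generateFrom
    {S : Set Θ.ToType | ∃ ξ < lam,
      (∃ b : Ordinal.{u}, S = {x | L ξ (ordVal x) ≤ b}) ∨
      (∃ a b : Ordinal.{u}, a < b ∧ S = {x | a < L ξ (ordVal x) ∧ L ξ (ordVal x) ≤ b})}

/-! ## Modal logic: GL and topological (d-)semantics -/

/-- Formulas of the basic modal language. -/
inductive Fml : Type
  | bot : Fml
  | var : ℕ → Fml
  | imp : Fml → Fml → Fml
  | box : Fml → Fml

namespace Fml

/-- Negation. -/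
def neg (p : Fml) : Fml := p.imp .bot

/-- Diamond. -/
def dia (p : Fml) : Fml := (p.neg.box).neg

end Fml

/-- The valuation determined by an assignment `V` of sets to propositional variables, in the
`d`-semantics: `⟦◇φ⟧ = d⟦φ⟧`, i.e. `⟦◻φ⟧` is the complement of the derived set of the
complement of `⟦φ⟧`. -/
def fval {X : Type u} (t : TopologicalSpace X) (V : ℕ → Set X) : Fml → Set X
  | .bot => ∅
  | .var n => V n
  | .imp p q => (fval t V p)ᶜ ∪ fval t V q
  | .box p => (dSet t (fval t V p)ᶜ)ᶜ

/-- Classical tautologies (boxed formulas and variables treated as atoms). -/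
def Tautology (φ : Fml) : Prop :=
  ∀ v : Fml → Bool, v .bot = false → (∀ p q : Fml, v (p.imp q) = (!(v p) || v q)) →
    v φ = true

/-- Provability in the Gödel–Löb provability logic `GL`. -/
inductive GLProv : Fml → Prop
  | taut {φ : Fml} : Tautology φ → GLProv φ
  | axK (p q : Fml) : GLProv (((p.imp q).box).imp ((p.box).imp q.box))
  | axLob (p : Fml) : GLProv ((((p.box).imp p).box).imp p.box)
  | mp {p q : Fml} : GLProv (p.imp q) → GLProv p → GLProv q
  | nec {p : Fml} : GLProv p → GLProv p.box

/-- A set of formulas is GL-consistent if no finite conjunction of its members provably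
implies `⊥`. -/
def GLConsistent (Γ : Set Fml) : Prop :=
  ¬ ∃ l : List Fml, (∀ φ ∈ l, φ ∈ Γ) ∧ GLProv (l.foldr .imp .bot)

/-- `Γ` is satisfied in the space `(X, t)`. -/
def SatisfiedIn {X : Type u} (t : TopologicalSpace X) (Γ : Set Fml) : Prop :=
  ∃ (V : ℕ → Set X) (x : X), ∀ φ ∈ Γ, x ∈ fval t V φ

/-- `GL` is strongly complete with respect to `(X, t)`. -/
def StronglyCompleteFor {X : Type u} (t : TopologicalSpace X) : Prop :=
  ∀ Γ : Set Fml, GLConsistent Γ → SatisfiedIn t Γ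

/-- Validity of a formula in a space under the `d`-semantics. -/
def ValidIn {X : Type u} (t : TopologicalSpace X) (φ : Fml) : Prop :=
  ∀ V : ℕ → Set X, fval t V φ = Set.univ

/-! ## Trees and ω-bouquets -/

/-- The upset topology of a relation: opens are the `R`-upward closed sets. -/
def upTop {T : Type u} (R : T → T → Prop) : TopologicalSpace T where
  IsOpen U := ∀ x ∈ U, ∀ y, R x y → y ∈ U
  isOpen_univ := fun x _ y _ => trivial
  isOpen_inter := fun s t hs ht x hx y hR => ⟨hs x hx.1 y hR, ht x hx.2 y hR⟩
  isOpen_sUnion := fun S hS x hx y hR => by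
    obtain ⟨s, hsS, hxs⟩ := hx
    exact ⟨s, hsS, hS s hsS x hxs y hR⟩

/-- A countable, converse well-founded tree. -/
structure IsOmegaTree {T : Type u} (R : T → T → Prop) : Prop where
  countable : Countable T
  trans : ∀ a b c, R a b → R b c → R a c
  irrefl : ∀ a, ¬ R a a
  predWellOrdered : ∀ t : T, IsWellOrder {s : T // R s t} (fun a b => R a.1 b.1)
  root : ∃! r : T, ∀ s : T, ¬ R s r
  converseWellFounded : WellFounded (fun a b : T => R b a)

/-- The daughters (immediate successors) of a node. -/
def daughters {T : Type u} (R : T → T → Prop) (w : T) : Set T :=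
  {v | R w v ∧ ¬ ∃ u, R w u ∧ R u v}

/-- The bouquet topology `σ_R`: the least topology extending the upset topology such that
whenever `w` has limit rank, `(v_i)` enumerates the daughters of `w` without repetition and
`n < ω`, the set `{w} ∪ ⋃_{i > n} ({v_i} ∪ R(v_i))` is open. -/
def sigmaTop {T : Type u} (R : T → T → Prop) : TopologicalSpace T :=
  upTop R ⊓ TopologicalSpace.generateFrom
    {S : Set T | ∃ w : T, Order.IsSuccLimit (ptRank (upTop R) w) ∧
      ∃ v : ℕ → T, Function.Injective v ∧ Set.range v = daughters R w ∧
        ∃ n : ℕ, S = {w} ∪ ⋃ (i : ℕ) (_ : n < i), ({v i} ∪ {u | R (v i) u})}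

/-! ## The club topology (via its neighborhood characterization) -/

/-- `C` is a club in (i.e. a closed unbounded subset of) the point `x`. -/
def IsClubIn {Θ : Ordinal.{u}} (C : Set Θ.ToType) (x : Θ.ToType) : Prop :=
  (∀ y ∈ C, y < x) ∧ (∀ z, z < x → ∃ y ∈ C, z < y) ∧
    ∀ z, z < x → (∃ w, w < z) → (∀ w, w < z → ∃ y ∈ C, w < y ∧ y < z) → z ∈ C

/-- `t` is the club topology on `Θ`: a set `U` is a neighborhood of a point `x ∈ U` iff
`U` contains a club in `x` or `cf(x) < ℵ₁`. -/
def IsClubTop (Θ : Ordinal.{u}) (t : TopologicalSpace Θ.ToType) : Prop :=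
  ∀ (U : Set Θ.ToType) (x : Θ.ToType), x ∈ U →
    (U ∈ @nhds _ t x ↔
      (Ordinal.cof (ordVal x) < Cardinal.aleph 1 ∨ ∃ C ⊆ U, IsClubIn C x))

section AuxBasic

open Order

theorem eFun_of_pos {x : Ordinal.{u}} (hx : 0 < x) : eFun x = ω ^ x := by
  have h1 : (1 : Ordinal.{u}) < ω ^ x :=
    lt_of_lt_of_le one_lt_omega0 (by
      conv_lhs => rw [← opow_one (ω : Ordinal.{u})]
      exact opow_le_opow_right omega0_pos (Ordinal.one_le_iff_ne_zero.2 hx.ne'))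
  have h2 : (1 : Ordinal.{u}) + ω ^ x = ω ^ x := add_omega0_opow h1
  show ω ^ x - 1 = ω ^ x
  calc ω ^ x - 1 = 1 + ω ^ x - 1 := by rw [h2]
    _ = ω ^ x := add_sub_cancel 1 _

theorem zero_lt_succ' (t : Ordinal.{u}) : 0 < t + 1 :=
  lt_of_le_of_lt (zero_le : 0 ≤ t) (by rw [add_one_eq_succ]; exact lt_succ t)

theorem isLimit_eFun_succ (t : Ordinal.{u}) : Order.IsSuccLimit (eFun (t + 1)) := by
  rw [eFun_of_pos (zero_lt_succ' t)]
  exact isSuccLimit_opow_left isSuccLimit_omega0 (zero_lt_succ' t).ne'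

theorem succ_lt_eFun (t : Ordinal.{u}) : t + 1 < eFun (t + 1) := by
  have hlim := isLimit_eFun_succ t
  have hle : t + 1 ≤ eFun (t + 1) := by
    rw [eFun_of_pos (zero_lt_succ' t)]
    exact right_le_opow _ one_lt_omega0
  rcases hle.lt_or_eq with h | h
  · exact h
  · exfalso
    rw [add_one_eq_succ] at h hlim
    rw [← h] at hlim
    exact not_isSuccLimit_succ _ hlim

theorem sub_opow_log_lt {a : Ordinal.{u}} (h : a ≠ 0) : a - ω ^ Ordinal.log ω a < a := by
  have h1 : ω ^ log ω a ≤ a := Ordinal.opow_log_le_self ω h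
  have h2 : a < ω ^ succ (log ω a) := Ordinal.lt_opow_succ_log_self one_lt_omega0 a
  rcases lt_or_eq_of_le (Ordinal.sub_le_self a (ω ^ log ω a)) with hlt | heq
  · exact hlt
  · exfalso
    have h3 := Ordinal.add_sub_cancel_of_le h1
    rw [heq] at h3
    have h4 : ∀ n : ℕ, ω ^ log ω a * n + a = a := by
      intro n; induction n with
      | zero => simp
      | succ n ih => rw [Nat.cast_succ, mul_add, mul_one, add_assoc, h3, ih]
    rw [opow_succ] at h2
    obtain ⟨c, hc, hac⟩ := (Ordinal.lt_mul_iff_of_isSuccLimit isSuccLimit_omega0).1 h2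
    obtain ⟨n, rfl⟩ := Ordinal.lt_omega0.1 hc
    have h5 : a < ω ^ log ω a * n + a := lt_of_lt_of_le hac le_self_add
    rw [h4 n] at h5
    exact lt_irrefl a h5

end AuxBasic

section FamF

open Order

/-- Composition family built from generators at indecomposable indices,
by peeling off the leading Cantor normal form term. -/
noncomputable def famF (f : Ordinal.{u} → Ordinal.{u} → Ordinal.{u}) (a : Ordinal.{u}) :
    Ordinal.{u} → Ordinal.{u} :=
  if h : a = 0 then id
  else f (Ordinal.log ω a) ∘ famF f (a - ω ^ Ordinal.log ω a)
termination_by a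
decreasing_by exact sub_opow_log_lt h

theorem famF_zero (f : Ordinal.{u} → Ordinal.{u} → Ordinal.{u}) : famF f 0 = id := by
  rw [famF]; simp

theorem famF_ne (f : Ordinal.{u} → Ordinal.{u} → Ordinal.{u}) {a : Ordinal.{u}} (h : a ≠ 0) :
    famF f a = f (Ordinal.log ω a) ∘ famF f (a - ω ^ Ordinal.log ω a) := by
  rw [famF]; simp [h]

theorem famF_opow (f : Ordinal.{u} → Ordinal.{u} → Ordinal.{u}) (γ : Ordinal.{u}) :
    famF f (ω ^ γ) = f γ := by
  rw [famF_ne f (opow_ne_zero γ omega0_ne_zero), Ordinal.log_opow one_lt_omega0,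
    Ordinal.sub_self, famF_zero]
  rfl

theorem famF_one (f : Ordinal.{u} → Ordinal.{u} → Ordinal.{u}) : famF f 1 = f 0 := by
  rw [show (1 : Ordinal.{u}) = ω ^ (0 : Ordinal.{u}) from (opow_zero ω).symm, famF_opow]

theorem famF_normal (f : Ordinal.{u} → Ordinal.{u} → Ordinal.{u})
    (hf : ∀ γ, Order.IsNormal (f γ)) (a : Ordinal.{u}) : Order.IsNormal (famF f a) := by
  induction a using Ordinal.induction with
  | h a IH =>
    rcases eq_or_ne a 0 with rfl | ha
    · rw [famF_zero]; exact Order.IsNormal.id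
    · rw [famF_ne f ha]
      exact (hf _).comp (IH _ (sub_opow_log_lt ha))

theorem famF_absorb (f : Ordinal.{u} → Ordinal.{u} → Ordinal.{u})
    (habs : ∀ γ δ, γ < δ → ∀ x, f γ (f δ x) = f δ x) {δ : Ordinal.{u}} :
    ∀ a, a < ω ^ δ → ∀ y, famF f a (f δ y) = f δ y := by
  intro a
  induction a using Ordinal.induction with
  | h a IH =>
    intro ha y
    rcases eq_or_ne a 0 with rfl | h0
    · rw [famF_zero]; rfl
    · rw [famF_ne f h0]
      have h1 : famF f (a - ω ^ log ω a) (f δ y) = f δ y :=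
        IH _ (sub_opow_log_lt h0) (lt_of_le_of_lt (Ordinal.sub_le_self _ _) ha) y
      have h2 : log ω a < δ := by
        have h3 : ω ^ log ω a < ω ^ δ := lt_of_le_of_lt (Ordinal.opow_log_le_self ω h0) ha
        exact (Ordinal.opow_lt_opow_iff_right one_lt_omega0).1 h3
      show f (log ω a) (famF f (a - ω ^ log ω a) (f δ y)) = f δ y
      rw [h1, habs _ _ h2]

theorem famF_add (f : Ordinal.{u} → Ordinal.{u} → Ordinal.{u})
    (habs : ∀ γ δ, γ < δ → ∀ x, f γ (f δ x) = f δ x) :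
    ∀ a b : Ordinal.{u}, famF f (a + b) = famF f a ∘ famF f b := by
  intro a
  induction a using Ordinal.induction with
  | h a IH =>
    intro b
    rcases eq_or_ne a 0 with rfl | ha
    · rw [zero_add, famF_zero]; rfl
    rcases eq_or_ne b 0 with rfl | hb
    · rw [add_zero, famF_zero]; rfl
    have hl1 : ω ^ log ω a ≤ a := Ordinal.opow_log_le_self ω ha
    have hl2 : a < ω ^ (log ω a + 1) := by
      rw [add_one_eq_succ]; exact Ordinal.lt_opow_succ_log_self one_lt_omega0 a
    have hsubeq : ω ^ log ω a + (a - ω ^ log ω a) = a := Ordinal.add_sub_cancel_of_le hl1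
    by_cases hbig : ω ^ (log ω a + 1) ≤ b
    · have hab : a + b = b := by
        conv_lhs => rw [← Ordinal.add_sub_cancel_of_le hbig]
        rw [← add_assoc, add_omega0_opow hl2, Ordinal.add_sub_cancel_of_le hbig]
      rw [hab]
      funext x
      have hlb : log ω a + 1 ≤ Ordinal.log ω b :=
        (Ordinal.opow_le_iff_le_log one_lt_omega0 hb).1 hbig
      have halt : a < ω ^ Ordinal.log ω b :=
        lt_of_lt_of_le hl2 (Ordinal.opow_le_opow_right omega0_pos hlb)
      simp only [Function.comp_apply]
      rw [famF_ne f hb]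
      simp only [Function.comp_apply]
      exact (famF_absorb f habs a halt _).symm
    · have hhb : b < ω ^ (log ω a + 1) := not_le.1 hbig
      have habne : a + b ≠ 0 := fun h => ha (nonpos_iff_eq_zero.1 (h ▸ (le_self_add : a ≤ a + b)))
      have hlog : Ordinal.log ω (a + b) = log ω a := by
        apply le_antisymm
        · have hab2 : a + b < ω ^ (log ω a + 1) :=
            principal_add_omega0_opow (log ω a + 1) hl2 hhb
          have h5 := (Ordinal.lt_opow_iff_log_lt one_lt_omega0 habne).1 hab2
          rwa [add_one_eq_succ, lt_succ_iff] at h5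
        · exact (Ordinal.opow_le_iff_le_log one_lt_omega0 habne).1
            (hl1.trans (le_self_add : a ≤ a + b))
      have hsub2 : a + b - ω ^ log ω a = (a - ω ^ log ω a) + b := by
        have h6 : a + b = ω ^ log ω a + ((a - ω ^ log ω a) + b) := by
          rw [← add_assoc, hsubeq]
        rw [h6, Ordinal.add_sub_cancel]
      rw [famF_ne f habne, hlog, hsub2, IH _ (sub_opow_log_lt ha) b, famF_ne f ha]
      rfl

end FamF

section HypFam

open Order

variable {E : Ordinal.{u} → Ordinal.{u} → Ordinal.{u}}

theorem hypE_add (hE : IsHyperexpFamily E) (a b x : Ordinal.{u}) :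
    E (a + b) x = E a (E b x) := congrFun (hE.2.2.1 a b) x

theorem hypE_one (hE : IsHyperexpFamily E) (x : Ordinal.{u}) : E 1 x = eFun x :=
  congrFun hE.2.1 x

theorem hypE_zero (hE : IsHyperexpFamily E) (x : Ordinal.{u}) : E 0 x = x := by
  have h : E 1 (E 0 x) = E 1 x := by
    have h2 := (hypE_add hE 1 0 x).symm
    rwa [add_zero] at h2
  exact (hE.1 1).strictMono.injective h

theorem hypE_index_mono (hE : IsHyperexpFamily E) {c d : Ordinal.{u}} (h : c ≤ d)
    (x : Ordinal.{u}) : E c x ≤ E d x := by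
  have hd : c + (d - c) = d := Ordinal.add_sub_cancel_of_le h
  calc E c x ≤ E c (E (d - c) x) := (hE.1 c).monotone (hE.1 (d - c)).strictMono.le_apply
    _ = E (c + (d - c)) x := (hypE_add hE c (d - c) x).symm
    _ = E d x := by rw [hd]

theorem hypE_index_strict (hE : IsHyperexpFamily E) {c d η : Ordinal.{u}} (h : c < d)
    (hη : η < eFun η) : E c η < E d η := by
  have h1 : (1 : Ordinal.{u}) ≤ d - c :=
    Ordinal.one_le_iff_ne_zero.2 fun h0 => (not_le.2 h) (Ordinal.sub_eq_zero_iff_le.1 h0)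
  have h2 : η < E (d - c) η := by
    refine lt_of_lt_of_le ?_ (hypE_index_mono hE h1 η)
    rwa [hypE_one hE]
  calc E c η < E c (E (d - c) η) := (hE.1 c).strictMono h2
    _ = E (c + (d - c)) η := (hypE_add hE c (d - c) η).symm
    _ = E d η := by rw [Ordinal.add_sub_cancel_of_le h.le]

/-- The common fixed points of `E c` for `c < ω ^ g`. -/
def EFix (E : Ordinal.{u} → Ordinal.{u} → Ordinal.{u}) (g : Ordinal.{u}) : Set Ordinal.{u} :=
  {x | ∀ c < ω ^ g, E c x = x}

theorem hypE_opow_mem_EFix (hE : IsHyperexpFamily E) (g x : Ordinal.{u}) :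
    E (ω ^ g) x ∈ EFix E g := by
  intro c hc
  have h1 : c + ω ^ g = ω ^ g := add_omega0_opow hc
  calc E c (E (ω ^ g) x) = E (c + ω ^ g) x := (hypE_add hE c _ x).symm
    _ = E (ω ^ g) x := by rw [h1]

/-- One sweep of all the functions below `ω ^ g` applied to `η`. -/
noncomputable def sweep (E : Ordinal.{u} → Ordinal.{u} → Ordinal.{u}) (g η : Ordinal.{u}) :
    Ordinal.{u} :=
  Ordinal.blsub.{u, u} (ω ^ g) fun c _ => E c η

theorem lt_sweep {g η : Ordinal.{u}} (c : Ordinal.{u}) (hc : c < ω ^ g) :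
    E c η < sweep E g η :=
  Ordinal.lt_blsub _ c hc

theorem sweep_isLimit (hE : IsHyperexpFamily E) {g η : Ordinal.{u}} (hg : g ≠ 0)
    (hη : η < eFun η) : Order.IsSuccLimit (sweep E g η) := by
  have hL : Order.IsSuccLimit (ω ^ g : Ordinal.{u}) := isSuccLimit_opow_left isSuccLimit_omega0 hg
  rw [Ordinal.isSuccLimit_iff, Order.isSuccPrelimit_iff_succ_lt]
  constructor
  · exact (Ordinal.blsub_pos (opow_pos g omega0_pos) _).ne'
  · intro a ha
    obtain ⟨c, hc, hac⟩ := Ordinal.lt_blsub_iff.1 ha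
    have h1 : E c η < E (c + 1) η := hypE_index_strict hE (by rw [add_one_eq_succ]; exact lt_succ c) hη
    have h2 : c + 1 < ω ^ g := by rw [add_one_eq_succ]; exact hL.succ_lt hc
    calc succ a ≤ succ (E c η) := succ_le_succ hac
      _ ≤ E (c + 1) η := succ_le_of_lt h1
      _ < sweep E g η := lt_sweep _ h2

theorem sweep_mem_EFix (hE : IsHyperexpFamily E) {g η : Ordinal.{u}} (hg : g ≠ 0)
    (hη : η < eFun η) : sweep E g η ∈ EFix E g := by
  intro d hd
  apply le_antisymm
  · refine ((hE.1 d).le_iff_forall_le (sweep_isLimit hE hg hη)).2 fun b hb => ?_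
    obtain ⟨c, hc, hbc⟩ := Ordinal.lt_blsub_iff.1 hb
    calc E d b ≤ E d (E c η) := (hE.1 d).monotone hbc
      _ = E (d + c) η := (hypE_add hE d c η).symm
      _ ≤ sweep E g η := (lt_sweep _ (principal_add_omega0_opow g hd hc)).le
  · exact (hE.1 d).strictMono.le_apply

theorem self_lt_sweep (hE : IsHyperexpFamily E) {g : Ordinal.{u}} (η : Ordinal.{u}) :
    η < sweep E g η := by
  have h := lt_sweep (E := E) (η := η) 0 (opow_pos g omega0_pos)
  rwa [hypE_zero hE] at h

theorem not_bddAbove_EFix (hE : IsHyperexpFamily E) {g : Ordinal.{u}} (hg : g ≠ 0) :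
    ¬ BddAbove (EFix E g) := by
  rintro ⟨b, hb⟩
  have hmem : sweep E g (b + 1) ∈ EFix E g := sweep_mem_EFix hE hg (succ_lt_eFun b)
  have h1 : b + 1 < sweep E g (b + 1) := self_lt_sweep hE _
  have h2 : b < b + 1 := by rw [add_one_eq_succ]; exact lt_succ b
  exact absurd (hb hmem) (not_le.2 (h2.trans h1))

theorem isClosed_EFix (hE : IsHyperexpFamily E) (g : Ordinal.{u}) : IsClosed (EFix E g) := by
  rw [Ordinal.isClosed_iff_iSup]
  intro ι hι f hf
  by_cases hat : ∃ i, f i = ⨆ i, f i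
  · obtain ⟨i, hi⟩ := hat
    rw [← hi]; exact hf i
  · push_neg at hat
    have hlim : Order.IsSuccLimit (⨆ i, f i) := by
      rw [Ordinal.isSuccLimit_iff, Order.isSuccPrelimit_iff_succ_lt]
      constructor
      · intro h0
        obtain ⟨i⟩ := hι
        have h1 : f i ≤ 0 := h0 ▸ Ordinal.le_iSup f i
        exact hat i (by rw [nonpos_iff_eq_zero.1 h1, h0])
      · intro a ha
        obtain ⟨i, hai⟩ := Ordinal.lt_iSup_iff.1 ha
        have h1 : f i < ⨆ i, f i := (Ordinal.le_iSup f i).lt_of_ne (hat i)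
        exact lt_of_le_of_lt (succ_le_of_lt hai) h1
    intro d hd
    apply le_antisymm
    · refine ((hE.1 d).le_iff_forall_le hlim).2 fun b hb => ?_
      obtain ⟨i, hbi⟩ := Ordinal.lt_iSup_iff.1 hb
      calc E d b ≤ E d (f i) := (hE.1 d).monotone hbi.le
        _ = f i := hf i d hd
        _ ≤ ⨆ i, f i := Ordinal.le_iSup f i
    · exact (hE.1 d).strictMono.le_apply

/-- The enumeration of the common fixed points. -/
noncomputable def phiF (E : Ordinal.{u} → Ordinal.{u} → Ordinal.{u}) (g : Ordinal.{u}) :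
    Ordinal.{u} → Ordinal.{u} :=
  Ordinal.enumOrd (EFix E g)

theorem phiF_normal (hE : IsHyperexpFamily E) {g : Ordinal.{u}} (hg : g ≠ 0) :
    Order.IsNormal (phiF E g) :=
  (Ordinal.enumOrd_isNormal_iff_isClosed (not_bddAbove_EFix hE hg)).2 (isClosed_EFix hE g)

theorem phiF_mem (hE : IsHyperexpFamily E) {g : Ordinal.{u}} (hg : g ≠ 0) (o : Ordinal.{u}) :
    phiF E g o ∈ EFix E g :=
  Ordinal.enumOrd_mem (not_bddAbove_EFix hE hg) o

theorem phiF_le (hE : IsHyperexpFamily E) {g : Ordinal.{u}} (hg : g ≠ 0) (o : Ordinal.{u}) :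
    phiF E g o ≤ E (ω ^ g) o := by
  induction o using Ordinal.induction with
  | h o IH =>
    exact Ordinal.enumOrd_le_of_forall_lt (hypE_opow_mem_EFix hE g o)
      fun b hb => lt_of_le_of_lt (IH b hb) ((hE.1 _).strictMono hb)

end HypFam

section Glue

open Order

variable {E : Ordinal.{u} → Ordinal.{u} → Ordinal.{u}}

/-- Generators for the competitor family: replace the generator at `g` by the
enumeration of the common fixed points. -/
noncomputable def fGen (E : Ordinal.{u} → Ordinal.{u} → Ordinal.{u}) (g : Ordinal.{u}) :
    Ordinal.{u} → Ordinal.{u} → Ordinal.{u} :=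
  fun γ => if γ = g then phiF E g else E (ω ^ γ)

theorem fGen_normal (hE : IsHyperexpFamily E) {g : Ordinal.{u}} (hg : g ≠ 0) (γ : Ordinal.{u}) :
    Order.IsNormal (fGen E g γ) := by
  rcases eq_or_ne γ g with rfl | h
  · simp only [fGen, if_pos rfl]
    exact phiF_normal hE hg
  · simp only [fGen, if_neg h]
    exact hE.1 _

theorem fGen_absorb (hE : IsHyperexpFamily E) {g : Ordinal.{u}} (hg : g ≠ 0) :
    ∀ γ δ, γ < δ → ∀ x, fGen E g γ (fGen E g δ x) = fGen E g δ x := by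
  intro γ δ hγδ x
  rcases eq_or_ne δ g with rfl | hδ
  · have hγ : γ ≠ δ := ne_of_lt hγδ
    simp only [fGen, if_pos rfl, if_neg hγ]
    exact phiF_mem hE hg x (ω ^ γ) ((Ordinal.opow_lt_opow_iff_right one_lt_omega0).2 hγδ)
  · rcases eq_or_ne γ g with rfl | hγ
    · simp only [fGen, if_pos rfl, if_neg hδ]
      have h1 : ω ^ γ + ω ^ δ = ω ^ δ :=
        add_omega0_opow ((Ordinal.opow_lt_opow_iff_right one_lt_omega0).2 hγδ)
      have h2 : E (ω ^ γ) (E (ω ^ δ) x) = E (ω ^ δ) x := by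
        rw [← hypE_add hE, h1]
      have h3 : phiF E γ (E (ω ^ δ) x) ≤ E (ω ^ δ) x := by
        have h4 := phiF_le hE hg (E (ω ^ δ) x)
        rwa [h2] at h4
      exact le_antisymm h3 (Ordinal.le_enumOrd_self (not_bddAbove_EFix hE hg))
    · simp only [fGen, if_neg hγ, if_neg hδ]
      rw [← hypE_add hE,
        add_omega0_opow ((Ordinal.opow_lt_opow_iff_right one_lt_omega0).2 hγδ)]

theorem hypE_opow_eq_phiF (hE : IsHyperexpFamily E) {g : Ordinal.{u}} (hg : g ≠ 0) :
    E (ω ^ g) = phiF E g := by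
  funext o
  apply le_antisymm
  · have hone : famF (fGen E g) 1 = eFun := by
      rw [famF_one]
      have h0 : (0 : Ordinal.{u}) ≠ g := fun h => hg h.symm
      simp only [fGen, if_neg h0]
      rw [opow_zero]
      exact hE.2.1
    have hFam := hE.2.2.2 (famF (fGen E g)) (famF_normal _ (fGen_normal hE hg)) hone
      (famF_add _ (fGen_absorb hE hg)) (ω ^ g) o
    rwa [famF_opow, fGen, if_pos rfl] at hFam
  · exact phiF_le hE hg o

theorem one_lt_opow_of_ne_zero {g : Ordinal.{u}} (hg : g ≠ 0) : (1 : Ordinal.{u}) < ω ^ g :=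
  lt_of_lt_of_le one_lt_omega0 (by
    conv_lhs => rw [← opow_one (ω : Ordinal.{u})]
    exact Ordinal.opow_le_opow_right omega0_pos (Ordinal.one_le_iff_ne_zero.2 hg))

theorem hypE_opow_succ_eq_sweep (hE : IsHyperexpFamily E) {g : Ordinal.{u}} (hg : g ≠ 0)
    (ζ : Ordinal.{u}) : E (ω ^ g) (ζ + 1) = sweep E g (phiF E g ζ + 1) := by
  have hub := not_bddAbove_EFix hE hg
  have hηs : phiF E g ζ + 1 < eFun (phiF E g ζ + 1) := succ_lt_eFun _
  have hz_mem : phiF E g (ζ + 1) ∈ EFix E g := phiF_mem hE hg _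
  have hφζ_lt : phiF E g ζ < phiF E g (ζ + 1) :=
    (Ordinal.enumOrd_strictMono hub) (by rw [add_one_eq_succ]; exact lt_succ ζ)
  have hz_lim : Order.IsSuccLimit (phiF E g (ζ + 1)) := by
    have h0 : 0 < phiF E g (ζ + 1) := lt_of_le_of_lt zero_le hφζ_lt
    have h1 : E 1 (phiF E g (ζ + 1)) = phiF E g (ζ + 1) :=
      hz_mem 1 (one_lt_opow_of_ne_zero hg)
    rw [hypE_one hE, eFun_of_pos h0] at h1
    rw [← h1]
    exact isSuccLimit_opow_left isSuccLimit_omega0 h0.ne'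
  have hη_lt : phiF E g ζ + 1 < phiF E g (ζ + 1) := by
    rw [add_one_eq_succ]; exact hz_lim.succ_lt hφζ_lt
  rw [hypE_opow_eq_phiF hE hg]
  apply le_antisymm
  · have hs_mem : sweep E g (phiF E g ζ + 1) ∈ EFix E g := sweep_mem_EFix hE hg hηs
    have hφ_lt_s : phiF E g ζ < sweep E g (phiF E g ζ + 1) := by
      have h2 : phiF E g ζ < phiF E g ζ + 1 := by rw [add_one_eq_succ]; exact lt_succ _
      exact h2.trans (self_lt_sweep hE _)
    have h3 := Ordinal.enumOrd_succ_le hub hs_mem hφ_lt_s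
    rw [← add_one_eq_succ] at h3
    exact h3
  · refine Ordinal.blsub_le fun c hc => ?_
    calc E c (phiF E g ζ + 1) < E c (phiF E g (ζ + 1)) := (hE.1 c).strictMono hη_lt
      _ = phiF E g (ζ + 1) := hz_mem c hc

theorem cof_sweep (hE : IsHyperexpFamily E) {g η : Ordinal.{u}} (hg : g ≠ 0)
    (hηs : η < eFun η) : (sweep E g η).cof = (ω ^ g : Ordinal.{u}).cof := by
  have hGnorm : Order.IsNormal (fun x => Ordinal.blsub.{u, u} x fun c _ => E c η) := by
    rw [Order.isNormal_iff]
    constructor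
    · intro x y hxy
      have h1 : Ordinal.blsub.{u, u} x (fun c _ => E c η) ≤ E x η :=
        Ordinal.blsub_le fun c hc => hypE_index_strict hE hc hηs
      exact lt_of_le_of_lt h1 (Ordinal.lt_blsub _ x hxy)
    · intro o ho a ha
      refine Ordinal.blsub_le fun c hc => ?_
      have h1 : c + 1 < o := by rw [add_one_eq_succ]; exact ho.succ_lt hc
      have h2 := ha (c + 1) h1
      have h3 : E c η < Ordinal.blsub.{u, u} (c + 1) fun c' _ => E c' η :=
        Ordinal.lt_blsub.{u, u} (o := c + 1) (fun c' _ => E c' η) c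
          (by rw [add_one_eq_succ]; exact lt_succ c)
      exact lt_of_lt_of_le h3 h2
  exact Ordinal.cof_map_of_isNormal hGnorm (isSuccLimit_opow_left isSuccLimit_omega0 hg)

theorem exists_last_term : ∀ a : Ordinal.{u}, a ≠ 0 → ∃ ρ gg : Ordinal.{u}, a = ρ + ω ^ gg := by
  intro a
  induction a using Ordinal.induction with
  | h a IH =>
    intro ha
    have hl1 : ω ^ log ω a ≤ a := Ordinal.opow_log_le_self ω ha
    have heq : ω ^ log ω a + (a - ω ^ log ω a) = a := Ordinal.add_sub_cancel_of_le hl1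
    rcases eq_or_ne (a - ω ^ log ω a) 0 with h0 | h0
    · refine ⟨0, log ω a, ?_⟩
      rw [zero_add]
      conv_lhs => rw [← heq, h0, add_zero]
    · obtain ⟨ρ, gg, hrep⟩ := IH _ (sub_opow_log_lt ha) h0
      exact ⟨ω ^ log ω a + ρ, gg, by rw [add_assoc, ← hrep, heq]⟩

end Glue


/-- For `λ > 0` and `ξ > 0`: if `ξ` is a limit then
`cf(e^λ(ξ)) = cf(ξ)`, and if `ξ` is a successor then `cf(e^λ(ξ)) = max(cf(λ), ℵ₀)`. -/
theorem cof_hyperexp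
    (E : Ordinal.{u} → Ordinal.{u} → Ordinal.{u}) (hE : IsHyperexpFamily E)
    (lam ξ : Ordinal.{u}) (hlam : lam ≠ 0) (hξ : ξ ≠ 0) :
    (Order.IsSuccLimit ξ → (E lam ξ).cof = ξ.cof) ∧
      (∀ ζ : Ordinal.{u}, ξ = ζ + 1 → (E lam ξ).cof = max lam.cof Cardinal.aleph0) := by
  constructor
  · intro hlim
    exact Ordinal.cof_map_of_isNormal (hE.1 lam) hlim
  · intro ζ hζ
    subst hζ
    obtain ⟨ρ, g, rfl⟩ := exists_last_term lam hlam
    have hE2 : E (ρ + ω ^ g) (ζ + 1) = E ρ (E (ω ^ g) (ζ + 1)) := hypE_add hE ρ _ _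
    rcases eq_or_ne g 0 with rfl | hg
    · rw [opow_zero] at hE2 ⊢
      have hζpos : (0 : Ordinal.{u}) < ζ + 1 := zero_lt_succ' ζ
      have h1 : E 1 (ζ + 1) = ω ^ (ζ + 1) := by rw [hypE_one hE, eFun_of_pos hζpos]
      have hlim2 : Order.IsSuccLimit ((ω : Ordinal.{u}) ^ (ζ + 1)) :=
        isSuccLimit_opow_left isSuccLimit_omega0 hζpos.ne'
      rw [hE2, h1, Ordinal.cof_map_of_isNormal (hE.1 ρ) hlim2]
      have h2 : (ω : Ordinal.{u}) ^ (ζ + 1) = ω ^ ζ * ω := by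
        rw [add_one_eq_succ, opow_succ]
      rw [h2, Ordinal.cof_map_of_isNormal (Ordinal.isNormal_mul_right (opow_pos ζ omega0_pos)) isSuccLimit_omega0,
        Ordinal.cof_omega0, add_one_eq_succ, Ordinal.cof_succ]
      exact (max_eq_right Cardinal.one_le_aleph0).symm
    · have hgl : Order.IsSuccLimit ((ω : Ordinal.{u}) ^ g) := isSuccLimit_opow_left isSuccLimit_omega0 hg
      have hηs : phiF E g ζ + 1 < eFun (phiF E g ζ + 1) := succ_lt_eFun _
      have hswlim : Order.IsSuccLimit (sweep E g (phiF E g ζ + 1)) := sweep_isLimit hE hg hηs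
      rw [hE2, hypE_opow_succ_eq_sweep hE hg ζ, Ordinal.cof_map_of_isNormal (hE.1 ρ) hswlim, cof_sweep hE hg hηs,
        Ordinal.cof_add ρ (Ordinal.opow_ne_zero g omega0_ne_zero)]
      exact (max_eq_left (Ordinal.aleph0_le_cof.2 hgl)).symm


end
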